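/- Let $L \geq 0$, let $\gamma_0,\dots,\gamma_L$ be real numbers not all zero, and let $P_l, Q_l$ be the numerator polynomials of the derivatives of $x(1+x^2)^{-3/2}$ and $(1+x^2)^{-3/2}$. Then the polynomial $\sum_{l=0}^L \gamma_l (1+x^2)^{L-l} x^l P_l(x)$ is not the zero polynomial, and it has degree at most $2L+1$. -/

import Mathlib

open Polynomial

theorem combination_ne_zero_and_degree
    (L : ℕ) (γ : ℕ → ℝ) (hγ : ∃ l ≤ L, γ l ≠ 0)
    (P : ℕ → Polynomial ℝ)
    (hP : ∀ l : ℕ, ∀ x : ℝ,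
      iteratedDeriv l (fun x : ℝ => x / (1 + x ^ 2) ^ ((3:ℝ)/2)) x
        = (P l).eval x / (1 + x ^ 2) ^ ((2 * (l:ℝ) + 3)/2)) :
    (∑ l ∈ Finset.range (L + 1),
        Polynomial.C (γ l) * (1 + Polynomial.X ^ 2) ^ (L - l) * Polynomial.X ^ l * P l) ≠ 0 ∧
    (∑ l ∈ Finset.range (L + 1),
        Polynomial.C (γ l) * (1 + Polynomial.X ^ 2) ^ (L - l) * Polynomial.X ^ l * P l).degree
      ≤ ((2 * L + 1 : ℕ) : WithBot ℕ) := by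
  classical
  -- Step 1: pointwise recursion
  have key : ∀ l (x : ℝ), (P (l+1)).eval x
      = (1 + x^2) * ((P l).derivative.eval x) - (2*(l:ℝ)+3) * x * (P l).eval x := by
    intro l x
    set q : ℝ := (2*(l:ℝ)+3)/2 with hq
    have hpos : (0:ℝ) < 1 + x^2 := by positivity
    have hne : ((1:ℝ)+x^2) ^ q ≠ 0 := (Real.rpow_pos_of_pos hpos q).ne'
    have hfun : iteratedDeriv l (fun x : ℝ => x / (1 + x ^ 2) ^ ((3:ℝ)/2))
        = fun y => (P l).eval y / (1+y^2) ^ q := by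
      funext y; rw [hP l y]
    have hinner : HasDerivAt (fun y : ℝ => 1 + y^2) (2*x) x := by
      simpa using (hasDerivAt_pow 2 x).const_add 1
    have hden : HasDerivAt (fun y : ℝ => (1+y^2) ^ q) ((q * (1+x^2) ^ (q-1)) * (2*x)) x :=
      by have h := hinner.rpow_const (p := q) (Or.inl hpos.ne'); convert h using 1; ring
    have hnum := (P l).hasDerivAt x
    have hdiv := hnum.div hden hne
    have hder := hP (l+1) x
    rw [iteratedDeriv_succ, hfun, show (fun y => (P l).eval y / (1+y^2)^q) = (fun x => (P l).eval x) / (fun y => (1+y^2)^q) from rfl, hdiv.deriv] at hder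
    have hcast : ((2:ℝ) * ((l+1:ℕ):ℝ) + 3)/2 = q + 1 := by push_cast [hq]; ring
    rw [hcast] at hder
    have e1 : ((1:ℝ)+x^2) ^ (q+1) = (1+x^2)^q * (1+x^2) := by
      rw [Real.rpow_add hpos, Real.rpow_one]
    have e2 : ((1:ℝ)+x^2) ^ q = (1+x^2)^(q-1) * (1+x^2) := by
      nth_rewrite 1 [show q = (q-1) + 1 by ring]
      rw [Real.rpow_add hpos, Real.rpow_one]
    have hne' : ((1:ℝ)+x^2) ^ (q-1) ≠ 0 := (Real.rpow_pos_of_pos hpos _).ne'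
    rw [e1, e2] at hder
    field_simp at hder
    have hEA2 : (((1:ℝ)+x^2) ^ (q-1) * (1+x^2))^2 ≠ 0 :=
      pow_ne_zero _ (mul_ne_zero hne' hpos.ne')
    apply mul_right_cancel₀ hEA2
    rw [← hder, hq]
    ring
  -- polynomial recursion
  have hrec : ∀ l, P (l+1)
      = (1 + X^2) * derivative (P l) - C (2*(l:ℝ)+3) * X * P l := by
    intro l
    apply Polynomial.funext
    intro x
    simpa using key l x
  -- P 0 = X
  have hP0 : P 0 = X := by
    apply Polynomial.funext
    intro x
    have h := hP 0 x
    have hpos : (0:ℝ) < 1 + x^2 := by positivity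
    have hne : ((1:ℝ)+x^2) ^ ((3:ℝ)/2) ≠ 0 := (Real.rpow_pos_of_pos hpos _).ne'
    rw [iteratedDeriv_zero] at h
    have h2 : ((2:ℝ) * ((0:ℕ):ℝ) + 3)/2 = (3:ℝ)/2 := by norm_num
    rw [h2] at h
    field_simp at h
    simp [← h]
  -- degree bound for P l
  have hdegP : ∀ l, (P l).natDegree ≤ l + 1 := by
    intro l
    induction l with
    | zero => simp [hP0]
    | succ n ih =>
      rw [hrec n]
      refine le_trans (natDegree_sub_le _ _) ?_
      have h1 : ((1 + X^2 : ℝ[X]) * derivative (P n)).natDegree ≤ n + 2 := by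
        refine le_trans (natDegree_mul_le) ?_
        have hx : (1 + X^2 : ℝ[X]).natDegree ≤ 2 := by
          refine le_trans (natDegree_add_le _ _) ?_
          simp
        have hd : (derivative (P n)).natDegree ≤ n := by
          refine le_trans (natDegree_derivative_le _) ?_
          omega
        omega
      have h2 : ((C (2*(n:ℝ)+3) * X * P n)).natDegree ≤ n + 2 := by
        refine le_trans (natDegree_mul_le) ?_
        have : (C (2*(n:ℝ)+3) * X : ℝ[X]).natDegree ≤ 1 :=
          le_trans (natDegree_C_mul_le _ _) (by simp)
        omega
      omega
  -- aeval at I is nonzero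
  have haev : ∀ l, (aeval Complex.I) (P l) ≠ 0 := by
    intro l
    induction l with
    | zero => simp [hP0, Complex.I_ne_zero]
    | succ n ih =>
      rw [hrec n]
      have h1 : (aeval Complex.I) ((1 + X^2 : ℝ[X])) = 0 := by
        simp [Complex.I_sq]
      rw [map_sub, map_mul, h1, zero_mul, zero_sub, neg_ne_zero, map_mul, map_mul,
        aeval_C, aeval_X]
      refine mul_ne_zero (mul_ne_zero ?_ Complex.I_ne_zero) ih
      have h3 : (2*(n:ℝ)+3) ≠ 0 := by positivity
      exact (map_ne_zero_iff _ (algebraMap ℝ ℂ).injective).mpr h3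
  -- pick greatest nonzero index
  obtain ⟨l0, hl0L, hl0⟩ := hγ
  set m := Nat.findGreatest (fun l => γ l ≠ 0) L with hm
  have hmne : γ m ≠ 0 := Nat.findGreatest_spec (P := fun l => γ l ≠ 0) hl0L hl0
  have hmL : m ≤ L := Nat.findGreatest_le L
  have hzero : ∀ k, m < k → k ≤ L → γ k = 0 := by
    intro k hk hkL
    by_contra h
    exact absurd (Nat.le_findGreatest hkL h) (not_le.mpr hk)
  -- rewrite the sum
  set S := ∑ l ∈ Finset.range (L + 1),
      Polynomial.C (γ l) * (1 + Polynomial.X ^ 2) ^ (L - l) * Polynomial.X ^ l * P l with hS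
  set R := ∑ l ∈ Finset.range (m + 1),
      Polynomial.C (γ l) * (1 + Polynomial.X ^ 2) ^ (m - l) * Polynomial.X ^ l * P l with hR
  have hSR : S = (1 + X^2)^(L - m) * R := by
    rw [hS, hR, Finset.mul_sum]
    rw [← Finset.sum_subset (Finset.range_subset_range.mpr (by omega : m + 1 ≤ L + 1))]
    · apply Finset.sum_congr rfl
      intro l hl
      rw [Finset.mem_range] at hl
      have : L - l = (L - m) + (m - l) := by omega
      rw [this, pow_add]
      ring
    · intro l hl hnl
      rw [Finset.mem_range] at hl hnl
      rw [hzero l (by omega) (by omega)]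
      simp
  have hRne : R ≠ 0 := by
    intro h
    have := congrArg (aeval Complex.I) h
    rw [hR, map_sum, map_zero] at this
    have heval : ∀ l ∈ Finset.range (m + 1),
        (aeval Complex.I) (Polynomial.C (γ l) * (1 + Polynomial.X ^ 2) ^ (m - l)
          * Polynomial.X ^ l * P l)
        = if l = m then (γ m : ℂ) * Complex.I ^ m * (aeval Complex.I) (P m) else 0 := by
      intro l hl
      rw [Finset.mem_range] at hl
      rw [map_mul, map_mul, map_mul, aeval_C, map_pow, map_pow, aeval_X]
      have h1 : (aeval Complex.I) ((1 + X^2 : ℝ[X])) = 0 := by simp [Complex.I_sq]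
      by_cases hlm : l = m
      · subst hlm
        simp [h1]
      · rw [h1, zero_pow (by omega), if_neg hlm]
        ring
    rw [Finset.sum_congr rfl heval] at this
    rw [Finset.sum_ite_eq' (Finset.range (m+1)) m] at this
    rw [if_pos (Finset.self_mem_range_succ m)] at this
    exact (mul_ne_zero (mul_ne_zero (by simpa using hmne) (pow_ne_zero _ Complex.I_ne_zero))
      (haev m)) this
  have hbase : (1 + X^2 : ℝ[X]) ≠ 0 := by
    intro h
    have := congrArg (Polynomial.eval 0) h
    simp at this
  constructor
  · rw [hSR]
    exact mul_ne_zero (pow_ne_zero _ hbase) hRne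
  · -- degree bound
    rw [hS]
    refine le_trans (Polynomial.degree_sum_le _ _) ?_
    apply Finset.sup_le
    intro l hl
    rw [Finset.mem_range] at hl
    refine le_trans (Polynomial.degree_le_natDegree) ?_
    rw [Nat.cast_le]
    refine le_trans (natDegree_mul_le) ?_
    have h1 : (Polynomial.C (γ l) * (1 + Polynomial.X ^ 2) ^ (L - l)
        * Polynomial.X ^ l : ℝ[X]).natDegree ≤ 2*(L-l) + l := by
      refine le_trans (natDegree_mul_le) ?_
      have h2 : (Polynomial.C (γ l) * (1 + Polynomial.X ^ 2) ^ (L - l) : ℝ[X]).natDegree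
          ≤ 2*(L-l) := by
        refine le_trans (natDegree_mul_le) ?_
        have : ((1 + Polynomial.X ^ 2 : ℝ[X]) ^ (L - l)).natDegree ≤ 2*(L-l) := by
          refine le_trans (natDegree_pow_le) ?_
          have : (1 + X^2 : ℝ[X]).natDegree ≤ 2 := by
            refine le_trans (natDegree_add_le _ _) ?_
            simp
          nlinarith
        simp only [natDegree_C, zero_add]
        omega
      simp only [natDegree_X_pow]
      omega
    have := hdegP l
    omega
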